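/- For k ∈ {2,3}, the maximum over all pairs (B, x) with B ⊆ Z_k and x ∈ Z_k, (B, x) ≠ (∅, 0), of the minimum length of a valid path from 0 to x covering B in the marked cycle on Z_k, equals k. -/

import Mathlib

/-- The four move types in the marked cycle. -/
inductive Move : Type
  | a | b | c | d
deriving DecidableEq

/-- Where a move from node `x` in `ZMod k` leads. -/
def Move.step {k : ℕ} (x : ZMod k) : Move → ZMod k
  | .a => x - 1
  | .b => x
  | .c => x + 1
  | .d => x

/-- The node covered by a move performed from node `x`. -/
def Move.covers {k : ℕ} (x : ZMod k) : Move → ZMod k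
  | .a => x - 1
  | .b => x
  | .c => x
  | .d => x - 1

/-- The node reached after performing a sequence of moves starting at `s`. -/
def endAt {k : ℕ} (s : ZMod k) : List Move → ZMod k
  | [] => s
  | m :: ms => endAt (Move.step s m) ms

/-- The set of nodes covered by a sequence of moves starting at `s`. -/
def coveredSet {k : ℕ} (s : ZMod k) : List Move → Set (ZMod k)
  | [] => ∅
  | m :: ms => insert (Move.covers s m) (coveredSet (Move.step s m) ms)

/-- A valid path in the marked cycle on `ZMod k` with marked set `B`, start `s`,
end `t`: a nonempty sequence of moves from `s` to `t` covering every node of `B`. -/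
def ValidPath {k : ℕ} (B : Set (ZMod k)) (s t : ZMod k) (p : List Move) : Prop :=
  p ≠ [] ∧ endAt s p = t ∧ B ⊆ coveredSet s p

/-- A shortest valid path: valid and of minimum length among all valid paths. -/
def ShortestPath {k : ℕ} (B : Set (ZMod k)) (s t : ZMod k) (p : List Move) : Prop :=
  ValidPath B s t p ∧ ∀ q : List Move, ValidPath B s t q → p.length ≤ q.length

/-- The list of nodes covered by a sequence of moves starting at `s`. -/
def covList {k : ℕ} (s : ZMod k) : List Move → List (ZMod k)
  | [] => []
  | m :: ms => Move.covers s m :: covList (Move.step s m) ms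

lemma covList_length {k : ℕ} (s : ZMod k) (p : List Move) :
    (covList s p).length = p.length := by
  induction p generalizing s with
  | nil => rfl
  | cons m ms ih => simp [covList, ih]

lemma mem_coveredSet {k : ℕ} (s : ZMod k) (p : List Move) (x : ZMod k) :
    x ∈ coveredSet s p ↔ x ∈ covList s p := by
  induction p generalizing s with
  | nil => simp [coveredSet, covList]
  | cons m ms ih => simp [coveredSet, covList, ih]

lemma length_ge_card {k : ℕ} [NeZero k] (p : List Move)
    (h : Set.univ ⊆ coveredSet (0 : ZMod k) p) : k ≤ p.length := by
  have h2 : ∀ x : ZMod k, x ∈ covList (0 : ZMod k) p := fun x =>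
    (mem_coveredSet _ _ _).mp (h (Set.mem_univ x))
  have hF : (covList (0 : ZMod k) p).toFinset = Finset.univ := by
    ext x; simp [h2]
  calc k = Fintype.card (ZMod k) := (ZMod.card k).symm
    _ = (covList (0:ZMod k) p).toFinset.card := by rw [hF]; simp
    _ ≤ (covList (0:ZMod k) p).length := (covList (0:ZMod k) p).toFinset_card_le
    _ = p.length := covList_length _ _

lemma valid_univ {k : ℕ} (p : List Move) (x : ZMod k) (hne : p ≠ [])
    (he : endAt 0 p = x) (hc : ∀ y : ZMod k, y ∈ covList (0:ZMod k) p)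
    (B : Set (ZMod k)) : ValidPath B 0 x p :=
  ⟨hne, he, fun y _ => (mem_coveredSet _ _ _).mpr (hc y)⟩

/-- for k ∈ {2,3}, the maximum over all pairs (B, x) ≠ (∅, 0) of the
minimum length of a valid path from 0 to x covering B equals k. -/
theorem diameter_small_k (k : ℕ) (hk : k = 2 ∨ k = 3) :
    IsGreatest
      {L : ℕ | ∃ (B : Set (ZMod k)) (x : ZMod k), ¬(B = ∅ ∧ x = 0) ∧
        L = sInf {m : ℕ | ∃ p : List Move, ValidPath B 0 x p ∧ p.length = m}}
      k := by
  rcases hk with rfl | rfl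
  · constructor
    · refine ⟨Set.univ, 0, by simp, ?_⟩
      have hmem : (2:ℕ) ∈ {m : ℕ | ∃ p : List Move,
          ValidPath (Set.univ : Set (ZMod 2)) 0 0 p ∧ p.length = m} :=
        ⟨[.c,.c], valid_univ _ _ (by simp) (by decide) (by decide) _, rfl⟩
      have hlb : ∀ m ∈ {m : ℕ | ∃ p : List Move,
          ValidPath (Set.univ : Set (ZMod 2)) 0 0 p ∧ p.length = m}, 2 ≤ m := by
        rintro m ⟨p, ⟨-, -, hcov⟩, rfl⟩
        exact length_ge_card p hcov
      exact (le_antisymm (Nat.sInf_le hmem) (le_csInf ⟨2, hmem⟩ hlb)).symm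
    · rintro L ⟨B, x, -, rfl⟩
      fin_cases x
      · exact Nat.sInf_le ⟨[.c,.c], valid_univ _ (0 : ZMod 2) (by simp) (by decide) (by decide) B, rfl⟩
      · exact Nat.sInf_le ⟨[.c,.b], valid_univ _ (1 : ZMod 2) (by simp) (by decide) (by decide) B, rfl⟩
  · constructor
    · refine ⟨Set.univ, 0, by simp, ?_⟩
      have hmem : (3:ℕ) ∈ {m : ℕ | ∃ p : List Move,
          ValidPath (Set.univ : Set (ZMod 3)) 0 0 p ∧ p.length = m} :=
        ⟨[.c,.c,.c], valid_univ _ _ (by simp) (by decide) (by decide) _, rfl⟩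
      have hlb : ∀ m ∈ {m : ℕ | ∃ p : List Move,
          ValidPath (Set.univ : Set (ZMod 3)) 0 0 p ∧ p.length = m}, 3 ≤ m := by
        rintro m ⟨p, ⟨-, -, hcov⟩, rfl⟩
        exact length_ge_card p hcov
      exact (le_antisymm (Nat.sInf_le hmem) (le_csInf ⟨3, hmem⟩ hlb)).symm
    · rintro L ⟨B, x, -, rfl⟩
      fin_cases x
      · exact Nat.sInf_le ⟨[.c,.c,.c], valid_univ _ (0 : ZMod 3) (by simp) (by decide) (by decide) B, rfl⟩
      · exact Nat.sInf_le ⟨[.a,.a,.d], valid_univ _ (1 : ZMod 3) (by simp) (by decide) (by decide) B, rfl⟩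
      · exact Nat.sInf_le ⟨[.c,.c,.b], valid_univ _ (2 : ZMod 3) (by simp) (by decide) (by decide) B, rfl⟩
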